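/- Let (a, b, m) be a Markov triple and r = ‖b‖²/‖a‖². Then for every integer j ≥ 1, the ℓ² operator norms satisfy ‖(m mᵀ)^j‖ = r^j and ‖(mᵀ m)^j‖ = r^j. (This is the even-length case of the statement that any alternating product of m and mᵀ of length k has norm r^{k/2}.) -/

import Mathlib

/-- The Euclidean norm of a vector in `ℝ^n`. -/
noncomputable def euclNorm {n : ℕ} (v : Fin n → ℝ) : ℝ :=
  Real.sqrt (∑ i, v i ^ 2)

/-- The ℓ² operator norm of a real matrix, i.e. the operator norm of the induced linear map
between Euclidean spaces. -/
noncomputable def opNorm {p q : ℕ} (m : Matrix (Fin p) (Fin q) ℝ) : ℝ :=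
  ‖LinearMap.toContinuousLinearMap (Matrix.toEuclideanLin m)‖

lemma euclNorm_nonneg {n : ℕ} (v : Fin n → ℝ) : 0 ≤ euclNorm v := Real.sqrt_nonneg _

lemma euclNorm_eq_norm {n : ℕ} (v : Fin n → ℝ) :
    euclNorm v = ‖(WithLp.equiv 2 (Fin n → ℝ)).symm v‖ := by
  rw [EuclideanSpace.norm_eq]
  simp [euclNorm, Real.norm_eq_abs, sq_abs]

lemma mulVec_le_opNorm {p q : ℕ} (M : Matrix (Fin p) (Fin q) ℝ) (x : Fin q → ℝ) :
    euclNorm (M.mulVec x) ≤ opNorm M * euclNorm x := by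
  have h := (LinearMap.toContinuousLinearMap (Matrix.toEuclideanLin M)).le_opNorm
    ((WithLp.equiv 2 (Fin q → ℝ)).symm x)
  simpa [euclNorm_eq_norm, opNorm, Matrix.toEuclideanLin_apply_piLp_toLp, Matrix.toEuclideanLin_apply] using h

lemma opNorm_le_of {p q : ℕ} (M : Matrix (Fin p) (Fin q) ℝ) {C : ℝ} (hC : 0 ≤ C)
    (h : ∀ x, euclNorm (M.mulVec x) ≤ C * euclNorm x) : opNorm M ≤ C := by
  refine ContinuousLinearMap.opNorm_le_bound _ hC fun y => ?_
  have h2 := h ((WithLp.equiv 2 (Fin q → ℝ)) y)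
  rw [euclNorm_eq_norm, euclNorm_eq_norm] at h2
  simpa [Matrix.toEuclideanLin_apply] using h2

lemma abs_le_euclNorm {n : ℕ} (x : Fin n → ℝ) (i : Fin n) : |x i| ≤ euclNorm x := by
  rw [← Real.sqrt_sq_eq_abs]
  exact Real.sqrt_le_sqrt (Finset.single_le_sum (fun j _ => sq_nonneg (x j)) (Finset.mem_univ i))

lemma euclNorm_smul {n : ℕ} (c : ℝ) (x : Fin n → ℝ) :
    euclNorm (c • x) = |c| * euclNorm x := by
  simp only [euclNorm, Pi.smul_apply, smul_eq_mul, mul_pow, ← Finset.mul_sum]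
  rw [Real.sqrt_mul (sq_nonneg c), Real.sqrt_sq_eq_abs]

open Matrix in
lemma key {p : ℕ} (hp : 0 < p) (P : Matrix (Fin p) (Fin p) ℝ) (hPsym : Pᵀ = P)
    (hPnn : ∀ i j, 0 ≤ P i j) (v : Fin p → ℝ) (hv : ∀ i, 1 ≤ v i)
    {r : ℝ} (hr : 0 < r) (hPv : P.mulVec v = r • v) (j : ℕ) :
    opNorm (P ^ j) = r ^ j := by
  have hvnn : ∀ i, 0 ≤ v i := fun i => le_trans zero_le_one (hv i)
  set Cv := euclNorm v with hCv
  have hCvpos : 0 < Cv := by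
    apply Real.sqrt_pos.2
    apply Finset.sum_pos (fun i _ => pow_pos (lt_of_lt_of_le one_pos (hv i)) 2)
    exact Finset.univ_nonempty_iff.2 ⟨⟨0, hp⟩⟩
  -- entries of powers are nonnegative
  have hPow : ∀ n : ℕ, ∀ i k, 0 ≤ (P ^ n) i k := by
    intro n
    induction n with
    | zero => intro i k; simp [Matrix.one_apply]; split <;> norm_num
    | succ n ih =>
      intro i k
      rw [pow_succ, Matrix.mul_apply]
      exact Finset.sum_nonneg fun l _ => mul_nonneg (ih i l) (hPnn l k)
  -- powers eigenvector
  have hPowv : ∀ n : ℕ, (P ^ n).mulVec v = r ^ n • v := by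
    intro n
    induction n with
    | zero => simp
    | succ n ih =>
      rw [pow_succ', ← Matrix.mulVec_mulVec, ih, Matrix.mulVec_smul, hPv, smul_smul,
        ← pow_succ]
  -- upper bound
  have hub : ∀ n : ℕ, opNorm (P ^ n) ≤ r ^ n * Cv := by
    intro n
    have hrn : (0:ℝ) ≤ r ^ n := le_of_lt (pow_pos hr n)
    apply opNorm_le_of _ (mul_nonneg hrn (le_of_lt hCvpos))
    intro x
    have hpt : ∀ i, |((P ^ n).mulVec x) i| ≤ euclNorm x * (r ^ n * v i) := by
      intro i
      have h1 : |((P ^ n).mulVec x) i| ≤ ∑ k, (P ^ n) i k * |x k| := by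
        rw [Matrix.mulVec, dotProduct]
        refine le_trans (Finset.abs_sum_le_sum_abs _ _) (Finset.sum_le_sum fun k _ => ?_)
        rw [abs_mul, abs_of_nonneg (hPow n i k)]
      refine le_trans h1 ?_
      have h2 : ∑ k, (P ^ n) i k * |x k| ≤ ∑ k, (P ^ n) i k * (euclNorm x * v k) := by
        refine Finset.sum_le_sum fun k _ => mul_le_mul_of_nonneg_left ?_ (hPow n i k)
        calc |x k| ≤ euclNorm x := abs_le_euclNorm x k
          _ = euclNorm x * 1 := (mul_one _).symm
          _ ≤ euclNorm x * v k := mul_le_mul_of_nonneg_left (hv k) (euclNorm_nonneg x)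
      refine le_trans h2 ?_
      have h3 : ∑ k, (P ^ n) i k * (euclNorm x * v k)
          = euclNorm x * ((P ^ n).mulVec v) i := by
        rw [Matrix.mulVec, dotProduct, Finset.mul_sum]
        exact Finset.sum_congr rfl fun k _ => by ring
      rw [h3, hPowv n]
      simp [smul_eq_mul]
    -- sum up
    have hnorm : euclNorm ((P ^ n).mulVec x) ≤ euclNorm x * (r ^ n * Cv) := by
      have : euclNorm ((P ^ n).mulVec x)
          ≤ Real.sqrt (∑ i, (euclNorm x * (r ^ n * v i)) ^ 2) := by
        apply Real.sqrt_le_sqrt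
        refine Finset.sum_le_sum fun i _ => ?_
        rw [← sq_abs (((P ^ n).mulVec x) i)]
        exact pow_le_pow_left₀ (abs_nonneg _) (hpt i) 2
      refine le_trans this (le_of_eq ?_)
      have : ∀ i, (euclNorm x * (r ^ n * v i)) ^ 2 = (euclNorm x * r ^ n) ^ 2 * v i ^ 2 :=
        fun i => by ring
      simp_rw [this, ← Finset.mul_sum]
      rw [Real.sqrt_mul (sq_nonneg _), Real.sqrt_sq_eq_abs,
        abs_of_nonneg (mul_nonneg (euclNorm_nonneg x) hrn)]
      show euclNorm x * r ^ n * Cv = euclNorm x * (r ^ n * Cv)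
      ring
    linarith [hnorm]
  -- lower bound
  have hlb : ∀ n : ℕ, r ^ n ≤ opNorm (P ^ n) := by
    intro n
    have h := mulVec_le_opNorm (P ^ n) v
    rw [hPowv n, euclNorm_smul, abs_of_nonneg (le_of_lt (pow_pos hr n))] at h
    exact le_of_mul_le_mul_right h hCvpos
  -- squaring
  have hsq : ∀ n : ℕ, opNorm (P ^ n) ^ 2 ≤ opNorm (P ^ (2 * n)) := by
    intro n
    have hK : (0:ℝ) ≤ opNorm (P ^ (2 * n)) := norm_nonneg _
    have hstep : opNorm (P ^ n) ≤ Real.sqrt (opNorm (P ^ (2 * n))) := by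
      apply opNorm_le_of _ (Real.sqrt_nonneg _)
      intro x
      set y := (P ^ n).mulVec x with hy
      have hsum : ∑ i, y i ^ 2 = ∑ i, ((P ^ (2 * n)).mulVec x) i * x i := by
        have h1 : ∑ i, y i ^ 2 = y ⬝ᵥ ((P ^ n).mulVec x) := by
          simp [dotProduct, hy, sq]
        rw [h1, Matrix.dotProduct_mulVec, ← Matrix.mulVec_transpose,
          Matrix.transpose_pow, hPsym, Matrix.mulVec_mulVec, ← pow_add]
        have : n + n = 2 * n := by ring
        rw [this]
        simp [dotProduct]
      have hCS : ∑ i, ((P ^ (2 * n)).mulVec x) i * x i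
          ≤ euclNorm ((P ^ (2 * n)).mulVec x) * euclNorm x :=
        Real.sum_mul_le_sqrt_mul_sqrt _ _ _
      have hbound : euclNorm y ^ 2 ≤ opNorm (P ^ (2 * n)) * euclNorm x ^ 2 := by
        have h2 : euclNorm y ^ 2 = ∑ i, y i ^ 2 :=
          Real.sq_sqrt (Finset.sum_nonneg fun i _ => sq_nonneg _)
        rw [h2, hsum]
        calc ∑ i, ((P ^ (2 * n)).mulVec x) i * x i
            ≤ euclNorm ((P ^ (2 * n)).mulVec x) * euclNorm x := hCS
          _ ≤ (opNorm (P ^ (2 * n)) * euclNorm x) * euclNorm x :=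
              mul_le_mul_of_nonneg_right (mulVec_le_opNorm _ _) (euclNorm_nonneg x)
          _ = opNorm (P ^ (2 * n)) * euclNorm x ^ 2 := by ring
      have hrhs : (Real.sqrt (opNorm (P ^ (2 * n))) * euclNorm x) ^ 2
          = opNorm (P ^ (2 * n)) * euclNorm x ^ 2 := by
        rw [mul_pow, Real.sq_sqrt hK]
      refine le_of_pow_le_pow_left₀ two_ne_zero
        (mul_nonneg (Real.sqrt_nonneg _) (euclNorm_nonneg x)) ?_
      rw [hrhs]; exact hbound
    calc opNorm (P ^ n) ^ 2 ≤ Real.sqrt (opNorm (P ^ (2 * n))) ^ 2 :=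
          pow_le_pow_left₀ (norm_nonneg _) hstep 2
      _ = opNorm (P ^ (2 * n)) := Real.sq_sqrt hK
  -- iterate
  have hiter : ∀ k : ℕ, opNorm (P ^ j) ^ (2 ^ k) ≤ opNorm (P ^ (j * 2 ^ k)) := by
    intro k
    induction k with
    | zero => simp
    | succ k ih =>
      have h1 : opNorm (P ^ j) ^ (2 ^ (k + 1)) = (opNorm (P ^ j) ^ (2 ^ k)) ^ 2 := by
        rw [← pow_mul, pow_succ]
      have h2 : (opNorm (P ^ j) ^ (2 ^ k)) ^ 2 ≤ opNorm (P ^ (j * 2 ^ k)) ^ 2 :=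
        pow_le_pow_left₀ (pow_nonneg (norm_nonneg _) _) ih 2
      have h3 : opNorm (P ^ (j * 2 ^ k)) ^ 2 ≤ opNorm (P ^ (2 * (j * 2 ^ k))) := hsq _
      have h4 : 2 * (j * 2 ^ k) = j * 2 ^ (k + 1) := by ring
      rw [h1, ← h4]
      exact le_trans h2 h3
  -- squeeze
  refine le_antisymm ?_ (hlb j)
  by_contra hcon
  push_neg at hcon
  have hrj : (0:ℝ) < r ^ j := pow_pos hr j
  set q := opNorm (P ^ j) / r ^ j with hq
  have hq1 : 1 < q := (one_lt_div hrj).2 hcon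
  obtain ⟨k, hk⟩ := pow_unbounded_of_one_lt Cv hq1
  have hbk : q ^ (2 ^ k) ≤ Cv := by
    have h1 : opNorm (P ^ j) ^ (2 ^ k) ≤ r ^ (j * 2 ^ k) * Cv :=
      le_trans (hiter k) (hub _)
    rw [hq, div_pow, div_le_iff₀ (pow_pos hrj _)]
    calc opNorm (P ^ j) ^ 2 ^ k ≤ r ^ (j * 2 ^ k) * Cv := h1
      _ = Cv * (r ^ j) ^ (2 ^ k) := by rw [pow_mul]; ring
  have hmono : q ^ k ≤ q ^ (2 ^ k) :=
    pow_le_pow_right₀ (le_of_lt hq1) (le_of_lt Nat.lt_two_pow_self)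
  linarith


/-- For a Markov triple `(a, b, m)` with `r = ‖b‖²/‖a‖²`, for every `j ≥ 1`
the ℓ² operator norms satisfy `‖(m mᵀ)^j‖ = r^j` and `‖(mᵀ m)^j‖ = r^j` (the even-length case
of: any alternating product of `m` and `mᵀ` of length `k` has norm `r^{k/2}`). -/
theorem markov_opNorm_alternating_even (s t : ℕ) (hs : 0 < s) (ht : 0 < t)
    (a : Fin s → ℝ) (b : Fin t → ℝ) (m : Matrix (Fin s) (Fin t) ℝ)
    (ha : ∀ i, ∃ n : ℕ, 0 < n ∧ a i = n)
    (hb : ∀ j, ∃ n : ℕ, 0 < n ∧ b j = n)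
    (hm : ∀ i j, ∃ n : ℕ, m i j = n)
    (hta : m.transpose.mulVec a = b)
    (r : ℝ) (hr : r = euclNorm b ^ 2 / euclNorm a ^ 2)
    (hmb : m.mulVec b = r • a) :
    ∀ j : ℕ, 1 ≤ j →
      opNorm ((m * m.transpose) ^ j) = r ^ j ∧
      opNorm ((m.transpose * m) ^ j) = r ^ j := by
  have ha1 : ∀ i, 1 ≤ a i := by
    intro i; obtain ⟨n, hn, he⟩ := ha i
    rw [he]; exact_mod_cast hn
  have hb1 : ∀ i, 1 ≤ b i := by
    intro i; obtain ⟨n, hn, he⟩ := hb i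
    rw [he]; exact_mod_cast hn
  have hmn : ∀ i j, 0 ≤ m i j := by
    intro i j; obtain ⟨n, he⟩ := hm i j
    rw [he]; exact_mod_cast Nat.zero_le n
  have hapos : 0 < euclNorm a := by
    apply Real.sqrt_pos.2
    apply Finset.sum_pos (fun i _ => pow_pos (lt_of_lt_of_le one_pos (ha1 i)) 2)
    exact Finset.univ_nonempty_iff.2 ⟨⟨0, hs⟩⟩
  have hbpos : 0 < euclNorm b := by
    apply Real.sqrt_pos.2
    apply Finset.sum_pos (fun i _ => pow_pos (lt_of_lt_of_le one_pos (hb1 i)) 2)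
    exact Finset.univ_nonempty_iff.2 ⟨⟨0, ht⟩⟩
  have hrpos : 0 < r := by
    rw [hr]; exact div_pos (pow_pos hbpos 2) (pow_pos hapos 2)
  intro j _
  constructor
  · apply key hs (m * m.transpose) _ _ a ha1 hrpos _ j
    · rw [Matrix.transpose_mul, Matrix.transpose_transpose]
    · intro i k
      rw [Matrix.mul_apply]
      exact Finset.sum_nonneg fun l _ =>
        mul_nonneg (hmn i l) (by simpa [Matrix.transpose_apply] using hmn k l)
    · rw [← Matrix.mulVec_mulVec, hta, hmb]
  · apply key ht (m.transpose * m) _ _ b hb1 hrpos _ j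
    · rw [Matrix.transpose_mul, Matrix.transpose_transpose]
    · intro i k
      rw [Matrix.mul_apply]
      exact Finset.sum_nonneg fun l _ =>
        mul_nonneg (by simpa [Matrix.transpose_apply] using hmn l i) (hmn l k)
    · rw [← Matrix.mulVec_mulVec, hmb, Matrix.mulVec_smul, hta]
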